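/- If (a_n) is a b-bounded arithmetic sequence and (d_n) is the associated non-arithmetic sequence enumerating in increasing order all integers r·a_k with 1 ≤ r < b_{k+1}, then t^s_{(a_n)}(T) = t^s_{(d_n)}(T). -/

import Mathlib

open Filter Topology

/-- Number of elements of `A` below `n`. -/
noncomputable def densCount (A : Set ℕ) (n : ℕ) : ℕ := Nat.card ↥(A ∩ Set.Iio n)

/-- `A ⊆ ℕ` has natural density `δ`. -/
def HasDensity (A : Set ℕ) (δ : ℝ) : Prop :=
  Tendsto (fun n => (densCount A n : ℝ) / n) atTop (𝓝 δ)

/-- Upper natural density of `A ⊆ ℕ`. -/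
noncomputable def upperDensity (A : Set ℕ) : ℝ :=
  Filter.limsup (fun n => (densCount A n : ℝ) / n) atTop

/-- A sequence in the circle `ℝ/ℤ` converges statistically to `0`. -/
def StatTendstoZero (x : ℕ → AddCircle (1:ℝ)) : Prop :=
  ∀ ε : ℝ, 0 < ε → HasDensity {n | ε ≤ ‖x n‖} 0

/-- The statistically characterized subset `t^s_{(a_n)}(𝕋)`. -/
def sChar (a : ℕ → ℤ) : Set (AddCircle (1:ℝ)) :=
  {x | StatTendstoZero (fun n => a n • x)}

/-- The characterized subset `t_{(a_n)}(𝕋)`. -/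
def charSet (a : ℕ → ℤ) : Set (AddCircle (1:ℝ)) :=
  {x | Tendsto (fun n => a n • x) atTop (𝓝 0)}

/-- `(a_n)` is an arithmetic sequence. -/
def IsArithSeq (a : ℕ → ℕ) : Prop :=
  a 0 = 1 ∧ StrictMono a ∧ ∀ n, a n ∣ a (n + 1)

/-- `d` is the increasing enumeration of `{r·a_k : 1 ≤ r < b_{k+1}}`. -/
def IsDSeq (a d : ℕ → ℕ) : Prop :=
  StrictMono d ∧
    Set.range d = {m : ℕ | ∃ k r : ℕ, 1 ≤ r ∧ r < a (k + 1) / a k ∧ m = r * a k}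

open Classical in
lemma densCount_eq_filter (A : Set ℕ) (n : ℕ) :
    densCount A n = ((Finset.range n).filter (· ∈ A)).card := by
  classical
  rw [densCount, Nat.card_coe_set_eq,
    show A ∩ Set.Iio n = ↑((Finset.range n).filter (· ∈ A)) by
      ext m; simp [and_comm]]
  exact Set.ncard_coe_finset _

lemma hasDensity_zero_of_le (A B : Set ℕ) (C : ℕ) (hC : 1 ≤ C)
    (hB : HasDensity B 0)
    (h : ∀ n, densCount A n ≤ C * densCount B (C * n)) :
    HasDensity A 0 := by
  have hCpos : (0:ℝ) < C := by exact_mod_cast hC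
  have h1 : Tendsto (fun n => C * n) atTop atTop :=
    tendsto_atTop_mono (fun n => Nat.le_mul_of_pos_left n hC) tendsto_id
  have hg : Tendsto (fun n => (C:ℝ)^2 * ((densCount B (C*n) : ℝ) / (C*n : ℕ))) atTop (𝓝 0) := by
    have := (hB.comp h1).const_mul ((C:ℝ)^2)
    simpa using this
  apply squeeze_zero (fun n => by positivity) _ hg
  intro n
  rcases Nat.eq_zero_or_pos n with h0 | hn
  · subst h0
    have : densCount A 0 = 0 := by simp [densCount]
    simp [this]
  · have hnpos : (0:ℝ) < n := by exact_mod_cast hn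
    have key : ((C:ℝ)^2) * ((densCount B (C*n) : ℝ) / (C*n : ℕ)) =
        (C * densCount B (C*n) : ℝ) / n := by
      push_cast
      field_simp
    rw [key]
    have hle : (densCount A n : ℝ) ≤ C * densCount B (C*n) := by exact_mod_cast h n
    gcongr

theorem stmt_6 (a d : ℕ → ℕ) (ha : IsArithSeq a)
    (hb : ∃ M : ℕ, ∀ n, a (n + 1) / a n ≤ M) (hd : IsDSeq a d) :
    sChar (fun n => (a n : ℤ)) = sChar (fun n => (d n : ℤ)) := by
  classical
  obtain ⟨M, hM⟩ := hb
  obtain ⟨ha0, hamono, hadvd⟩ := ha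
  obtain ⟨hdmono, hdrange⟩ := hd
  have hapos : ∀ n, 0 < a n := fun n => ha0 ▸ hamono.monotone (Nat.zero_le n) |>.trans_lt' one_pos
  have hb2 : ∀ kk, 2 ≤ a (kk+1) / a kk := by
    intro kk
    have hdiv := Nat.div_mul_cancel (hadvd kk)
    by_contra hlt
    push_neg at hlt
    have hle : a (kk+1) / a kk ≤ 1 := by omega
    have h1 : a (kk+1) ≤ a kk := by
      calc a (kk+1) = (a (kk+1) / a kk) * a kk := hdiv.symm
        _ ≤ 1 * a kk := Nat.mul_le_mul_right _ hle
        _ = a kk := one_mul _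
    exact absurd (hamono (lt_add_one kk)) (not_lt.mpr h1)
  have hM2 : 2 ≤ M := le_trans (hb2 0) (hM 0)
  have hmem : ∀ n, ∃ kk rr : ℕ, 1 ≤ rr ∧ rr < a (kk+1) / a kk ∧ d n = rr * a kk := by
    intro n
    have : d n ∈ Set.range d := ⟨n, rfl⟩
    rw [hdrange] at this
    exact this
  choose k r hr1 hrb hdkr using hmem
  have hae : ∀ j, ∃ m, d m = a j := by
    intro j
    have : a j ∈ {m : ℕ | ∃ kk rr : ℕ, 1 ≤ rr ∧ rr < a (kk+1) / a kk ∧ m = rr * a kk} :=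
      ⟨j, 1, le_refl 1, lt_of_lt_of_le one_lt_two (hb2 j), (one_mul _).symm⟩
    rw [← hdrange] at this
    exact this
  choose e he using hae
  have hemono : StrictMono e := fun i j hij =>
    hdmono.lt_iff_lt.mp (by rw [he, he]; exact hamono hij)
  have hadn : ∀ n, a (k n) ≤ d n := by
    intro n
    rw [hdkr]
    exact Nat.le_mul_of_pos_left _ (hr1 n)
  have hkn : ∀ n, k n ≤ n := by
    intro n
    have h1 : d (e (k n)) ≤ d n := by rw [he]; exact hadn n
    exact le_trans hemono.le_apply (hdmono.le_iff_le.mp h1)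
  have hrM : ∀ n, r n < M := fun n => lt_of_lt_of_le (hrb n) (hM (k n))
  have hinj : Function.Injective (fun n => (k n, r n)) := by
    intro m n hmn
    simp only [Prod.mk.injEq] at hmn
    apply hdmono.injective
    rw [hdkr, hdkr, hmn.1, hmn.2]
  have heM : ∀ j, e j ≤ M * j := by
    intro j
    have hcard : (Finset.range (e j)).card ≤ ((Finset.range j) ×ˢ (Finset.Ico 1 M)).card := by
      apply Finset.card_le_card_of_injOn (fun n => (k n, r n))
      · intro n hn
        simp only [Finset.mem_coe, Finset.mem_range] at hn
        have h1 : d n < a j := by rw [← he]; exact hdmono hn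
        have h2 : k n < j := hamono.lt_iff_lt.mp (lt_of_le_of_lt (hadn n) h1)
        simp only [Finset.mem_coe, Finset.mem_product, Finset.mem_range, Finset.mem_Ico]
        exact ⟨h2, hr1 n, hrM n⟩
      · exact fun x _ y _ hxy => hinj hxy
    have : e j ≤ j * (M - 1) := by
      simpa [Nat.card_Ico] using hcard
    calc e j ≤ j * (M - 1) := this
      _ ≤ j * M := Nat.mul_le_mul_left _ (Nat.sub_le _ _)
      _ = M * j := Nat.mul_comm _ _
  have hMpos : (0:ℝ) < M := by exact_mod_cast lt_of_lt_of_le two_pos hM2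
  have hM1 : 1 ≤ M := by omega
  ext x
  simp only [sChar, Set.mem_setOf_eq, StatTendstoZero]
  constructor
  · intro hx ε hε
    have hnorm : ∀ n : ℕ, ‖((d n : ℕ) : ℤ) • x‖ ≤ M * ‖((a (k n) : ℕ) : ℤ) • x‖ := by
      intro n
      have h1 : ((d n : ℕ) : ℤ) • x = (r n) • (((a (k n) : ℕ) : ℤ) • x) := by
        rw [hdkr n]
        push_cast
        rw [mul_smul, natCast_zsmul]
      rw [h1]
      calc ‖(r n) • (((a (k n) : ℕ) : ℤ) • x)‖
          ≤ (r n : ℝ) * ‖((a (k n) : ℕ) : ℤ) • x‖ := norm_nsmul_le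
        _ ≤ M * ‖((a (k n) : ℕ) : ℤ) • x‖ := by
            gcongr
            exact_mod_cast (hrM n).le
    have hB := hx (ε / M) (by positivity)
    apply hasDensity_zero_of_le _ _ M hM1 hB
    intro N
    rw [densCount_eq_filter, densCount_eq_filter]
    have hcard : ((Finset.range N).filter
          (· ∈ {n : ℕ | ε ≤ ‖((d n : ℕ) : ℤ) • x‖})).card ≤
        (((Finset.range (M*N)).filter
          (· ∈ {j : ℕ | ε / M ≤ ‖((a j : ℕ) : ℤ) • x‖})) ×ˢ Finset.Ico 1 M).card := by
      apply Finset.card_le_card_of_injOn (fun n => (k n, r n))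
      · intro n hn
        simp only [Finset.mem_coe, Finset.mem_filter, Finset.mem_range, Set.mem_setOf_eq] at hn
        simp only [Finset.mem_coe, Finset.mem_product, Finset.mem_filter, Finset.mem_range, Finset.mem_Ico,
          Set.mem_setOf_eq]
        refine ⟨⟨lt_of_le_of_lt (hkn n) (lt_of_lt_of_le hn.1 (Nat.le_mul_of_pos_left N (by omega))), ?_⟩, hr1 n, hrM n⟩
        rw [div_le_iff₀ hMpos]
        calc ε ≤ ‖((d n : ℕ) : ℤ) • x‖ := hn.2
          _ ≤ M * ‖((a (k n) : ℕ) : ℤ) • x‖ := hnorm n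
          _ = ‖((a (k n) : ℕ) : ℤ) • x‖ * M := mul_comm _ _
      · exact fun p _ q _ hpq => hinj hpq
    calc ((Finset.range N).filter (· ∈ {n : ℕ | ε ≤ ‖((d n : ℕ) : ℤ) • x‖})).card
        ≤ (((Finset.range (M*N)).filter
            (· ∈ {j : ℕ | ε / M ≤ ‖((a j : ℕ) : ℤ) • x‖})) ×ˢ Finset.Ico 1 M).card := hcard
      _ = ((Finset.range (M*N)).filter
            (· ∈ {j : ℕ | ε / M ≤ ‖((a j : ℕ) : ℤ) • x‖})).card * (M - 1) := by
          simp [Finset.card_product]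
      _ ≤ M * ((Finset.range (M*N)).filter
            (· ∈ {j : ℕ | ε / M ≤ ‖((a j : ℕ) : ℤ) • x‖})).card := by
          rw [Nat.mul_comm]
          exact Nat.mul_le_mul_right _ (by omega)
  · intro hx ε hε
    have hB := hx ε hε
    apply hasDensity_zero_of_le _ _ M hM1 hB
    intro K
    rw [densCount_eq_filter, densCount_eq_filter]
    have hcard : ((Finset.range K).filter
          (· ∈ {j : ℕ | ε ≤ ‖((a j : ℕ) : ℤ) • x‖})).card ≤
        ((Finset.range (M*K)).filter
          (· ∈ {n : ℕ | ε ≤ ‖((d n : ℕ) : ℤ) • x‖})).card := by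
      apply Finset.card_le_card_of_injOn e
      · intro j hj
        simp only [Finset.mem_coe, Finset.mem_filter, Finset.mem_range, Set.mem_setOf_eq] at hj ⊢
        constructor
        · calc e j ≤ M * j := heM j
            _ < M * K := Nat.mul_lt_mul_of_pos_left hj.1 (show 0 < M by omega)
        · rw [show ((d (e j) : ℕ) : ℤ) = ((a j : ℕ) : ℤ) from congrArg Nat.cast (he j)]
          exact hj.2
      · exact fun p _ q _ hpq => hemono.injective hpq
    exact le_trans hcard (Nat.le_mul_of_pos_left _ (by omega))
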